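/- Let m ≥ 1 be an integer and let A_m be the (m+1)×(m+1) real matrix defined below. Then the characteristic polynomial of A_m factors over the reals as ∏_{s=0}^{m} (X − (3m/2 + (m−2s)·√17/2)); equivalently, the eigenvalues of A_m, counted with multiplicity, are exactly the m+1 numbers s·λ₁ + (m−s)·λ₂ for s = 0, 1, …, m, where λ₁ = (3−√17)/2 and λ₂ = (3+√17)/2 are the two roots of x² − 3x − 2 = 0. -/

import Mathlib

/-- The tridiagonal matrix `A_m` of the paper: `(A_m)_{i,i} = 3 i`,
`(A_m)_{i,i+1} = 2 (i+1)`, `(A_m)_{i+1,i} = m - i`, all other entries `0`. -/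
noncomputable def paperA (m : ℕ) : Matrix (Fin (m + 1)) (Fin (m + 1)) ℝ :=
  Matrix.of fun i j =>
    if (i : ℕ) = (j : ℕ) then 3 * ((i : ℕ) : ℝ)
    else if (j : ℕ) = (i : ℕ) + 1 then 2 * (((i : ℕ) : ℝ) + 1)
    else if (i : ℕ) = (j : ℕ) + 1 then (m : ℝ) - ((j : ℕ) : ℝ)
    else 0

open Polynomial

namespace PaperAux

noncomputable def pa : ℝ := (3 - Real.sqrt 17) / 2
noncomputable def pb : ℝ := (3 + Real.sqrt 17) / 2

noncomputable def μ (m s : ℕ) : ℝ :=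
  3 * (m : ℝ) / 2 + ((m : ℝ) - 2 * (s : ℝ)) * Real.sqrt 17 / 2

noncomputable def q (m s : ℕ) : ℝ[X] := (X - C pb) ^ s * (X - C pa) ^ (m - s)

lemma sq17 : Real.sqrt 17 * Real.sqrt 17 = 17 :=
  Real.mul_self_sqrt (by norm_num)

lemma key_poly (a b : ℝ) (s t : ℕ) :
    (C ((s+t : ℕ) : ℝ)) * X * ((X - C a)^s * (X - C b)^t)
      + (-((X - C a) * (X - C b))) * derivative ((X - C a)^s * (X - C b)^t)
      = C ((s:ℝ) * b + (t:ℝ) * a) * ((X - C a)^s * (X - C b)^t) := by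
  have hd : derivative ((X - C a)^s * (X - C b)^t)
      = C (s:ℝ) * (X - C a)^(s-1) * (X - C b)^t
        + C (t:ℝ) * (X - C a)^s * (X - C b)^(t-1) := by
    simp [derivative_mul, derivative_pow, derivative_X_sub_C]
    ring
  have ha : (X - C a) * ((X - C a)^(s-1) * C (s:ℝ)) = C (s:ℝ) * (X - C a)^s := by
    cases s with
    | zero => simp
    | succ n => rw [Nat.succ_sub_one]; ring
  have hb : (X - C b) * ((X - C b)^(t-1) * C (t:ℝ)) = C (t:ℝ) * (X - C b)^t := by
    cases t with
    | zero => simp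
    | succ n => rw [Nat.succ_sub_one]; ring
  rw [hd]
  have expand : (-((X - C a) * (X - C b))) *
      (C (s:ℝ) * (X - C a)^(s-1) * (X - C b)^t + C (t:ℝ) * (X - C a)^s * (X - C b)^(t-1))
      = -(C (s:ℝ) * (X - C b)) * ((X - C a)^s * (X - C b)^t)
        - (C (t:ℝ) * (X - C a)) * ((X - C a)^s * (X - C b)^t) := by
    calc (-((X - C a) * (X - C b))) *
        (C (s:ℝ) * (X - C a)^(s-1) * (X - C b)^t + C (t:ℝ) * (X - C a)^s * (X - C b)^(t-1))
        = -(X - C b) * (X - C b)^t * ((X - C a) * ((X - C a)^(s-1) * C (s:ℝ)))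
          - (X - C a) * (X - C a)^s * ((X - C b) * ((X - C b)^(t-1) * C (t:ℝ))) := by ring
      _ = _ := by rw [ha, hb]; ring
  rw [expand]
  have hC : C ((s+t : ℕ) : ℝ) * X - C (s:ℝ) * (X - C b) - C (t:ℝ) * (X - C a)
      = C ((s:ℝ) * b + (t:ℝ) * a) := by
    push_cast
    simp only [C_add, C_mul]
    ring
  calc _ = (C ((s+t : ℕ) : ℝ) * X - C (s:ℝ) * (X - C b) - C (t:ℝ) * (X - C a))
            * ((X - C a)^s * (X - C b)^t) := by ring
    _ = _ := by rw [hC]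

lemma coeff_op (p : ℝ[X]) (M : ℝ) (n : ℕ) :
    (C M * X * p + (C 2 + C 3 * X - X^2) * derivative p).coeff n
      = 3 * (n:ℝ) * p.coeff n + 2 * ((n:ℝ)+1) * p.coeff (n+1)
        + (if n = 0 then 0 else (M - ((n-1 : ℕ):ℝ)) * p.coeff (n-1)) := by
  have h : (C M * X * p + (C 2 + C 3 * X - X^2) * derivative p : ℝ[X])
      = C M * (X * p) + C 2 * derivative p + C 3 * (X * derivative p)
        - X * (X * derivative p) := by ring
  rw [h]
  match n with
  | 0 =>
      simp [coeff_derivative, mul_coeff_zero]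
  | 1 =>
      simp [coeff_derivative, coeff_X_mul, mul_coeff_zero]
      ring
  | (k+2) =>
      simp [coeff_derivative, coeff_X_mul]
      ring

/-- The differential equation satisfied by `q m s`. -/
lemma q_ode (m s : ℕ) (hs : s ≤ m) :
    C (m : ℝ) * X * q m s + (C 2 + C 3 * X - X^2) * derivative (q m s)
      = C (μ m s) * q m s := by
  have h := key_poly pb pa s (m - s)
  have hsum : s + (m - s) = m := Nat.add_sub_cancel' hs
  rw [hsum] at h
  have hfact : (-(((X : ℝ[X]) - C pb) * (X - C pa))) = C 2 + C 3 * X - X^2 := by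
    have e1 : (C pb + C pa : ℝ[X]) = C 3 := by
      rw [← C_add]
      congr 1
      unfold pa pb
      ring
    have e2 : (C pb * C pa : ℝ[X]) = C (-2) := by
      rw [← C_mul]
      congr 1
      have : pb * pa = (9 - Real.sqrt 17 * Real.sqrt 17) / 4 := by unfold pa pb; ring
      rw [this, sq17]
      norm_num
    calc (-(((X : ℝ[X]) - C pb) * (X - C pa)))
        = (C pb + C pa) * X - C pb * C pa - X^2 := by ring
      _ = C 3 * X - C (-2) - X^2 := by rw [e1, e2]
      _ = C 2 + C 3 * X - X^2 := by simp [map_neg]; ring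
  have hμ : (s : ℝ) * pa + ((m - s : ℕ) : ℝ) * pb = μ m s := by
    rw [Nat.cast_sub hs]
    unfold pa pb μ
    ring
  rw [hfact, hμ] at h
  exact h

noncomputable def entry (m i j : ℕ) : ℝ :=
  if i = j then 3 * (i : ℝ)
  else if j = i + 1 then 2 * ((i : ℝ) + 1)
  else if i = j + 1 then (m : ℝ) - (j : ℝ)
  else 0

lemma entry_split (m i j : ℕ) :
    entry m i j = (if j = i then 3 * (i : ℝ) else 0)
      + (if j = i + 1 then 2 * ((i : ℝ) + 1) else 0)
      + (if i ≠ 0 ∧ j = i - 1 then (m : ℝ) - ((i - 1 : ℕ) : ℝ) else 0) := by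
  unfold entry
  split_ifs <;> first | ring1 | (exfalso; omega) | (rw [show i - 1 = j from by omega]; ring1)

lemma sumrow (m i : ℕ) (hi : i ≤ m) (c : ℕ → ℝ) (hc : c (m + 1) = 0) :
    ∑ j ∈ Finset.range (m + 1), entry m i j * c j
      = 3 * (i : ℝ) * c i + 2 * ((i : ℝ) + 1) * c (i + 1)
        + (if i = 0 then 0 else ((m : ℝ) - ((i - 1 : ℕ) : ℝ)) * c (i - 1)) := by
  simp only [entry_split, add_mul, Finset.sum_add_distrib, ite_mul, zero_mul]
  rw [Finset.sum_ite_eq' (Finset.range (m+1)) i (fun j => 3 * (i:ℝ) * c j),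
    Finset.sum_ite_eq' (Finset.range (m+1)) (i+1) (fun j => 2 * ((i:ℝ)+1) * c j)]
  have h3 : ∑ j ∈ Finset.range (m + 1), (if i ≠ 0 ∧ j = i - 1 then ((m:ℝ) - ((i-1:ℕ):ℝ)) * c j else 0)
      = if i = 0 then 0 else ((m : ℝ) - ((i - 1 : ℕ) : ℝ)) * c (i - 1) := by
    by_cases h0 : i = 0
    · simp [h0]
    · simp only [h0, ne_eq, not_false_eq_true, true_and, if_false]
      rw [Finset.sum_ite_eq' (Finset.range (m+1)) (i-1) (fun j => ((m:ℝ) - ((i-1:ℕ):ℝ)) * c j)]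
      simp only [Finset.mem_range]
      rw [if_pos (by omega)]
  rw [h3]
  simp only [Finset.mem_range]
  rw [if_pos (by omega)]
  by_cases him : i = m
  · subst him
    rw [if_neg (by omega)]
    simp [hc]
  · rw [if_pos (by omega)]

lemma q_monic (m s : ℕ) : (q m s).Monic :=
  ((monic_X_sub_C pb).pow s).mul ((monic_X_sub_C pa).pow (m - s))

lemma q_natDegree (m s : ℕ) (hs : s ≤ m) : (q m s).natDegree = m := by
  unfold q
  rw [((monic_X_sub_C pb).pow s).natDegree_mul ((monic_X_sub_C pa).pow (m - s))]
  simp only [natDegree_pow, natDegree_X_sub_C]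
  omega

lemma q_coeff_top (m s : ℕ) (hs : s ≤ m) : (q m s).coeff m = 1 := by
  have := (q_monic m s).coeff_natDegree
  rwa [q_natDegree m s hs] at this

lemma q_coeff_zero' (m s : ℕ) (hs : s ≤ m) : (q m s).coeff (m + 1) = 0 :=
  coeff_eq_zero_of_natDegree_lt (by rw [q_natDegree m s hs]; omega)

end PaperAux

namespace PaperAux

/-- The eigenvector equation. -/
lemma mulVec_eigen (m s : ℕ) (hs : s ≤ m) :
    (paperA m).mulVec (fun j : Fin (m + 1) => (q m s).coeff (j : ℕ))
      = μ m s • (fun j : Fin (m + 1) => (q m s).coeff (j : ℕ)) := by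
  funext i
  have hi : (i : ℕ) ≤ m := Nat.lt_succ_iff.mp i.isLt
  have hrow : (paperA m).mulVec (fun j : Fin (m + 1) => (q m s).coeff (j : ℕ)) i
      = ∑ j ∈ Finset.range (m + 1), entry m (i : ℕ) j * (q m s).coeff j := by
    rw [Matrix.mulVec, dotProduct,
      ← Fin.sum_univ_eq_sum_range (fun j => entry m (i : ℕ) j * (q m s).coeff j) (m + 1)]
    rfl
  rw [hrow, sumrow m (i : ℕ) hi _ (q_coeff_zero' m s hs)]
  have h1 := congrArg (fun p => Polynomial.coeff p (i : ℕ)) (q_ode m s hs)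
  rw [coeff_op] at h1
  rw [h1, coeff_C_mul]
  simp

lemma eigen_nonzero (m s : ℕ) (hs : s ≤ m) :
    (fun j : Fin (m + 1) => (q m s).coeff (j : ℕ)) ≠ 0 := by
  intro h
  have := congrFun h ⟨m, by omega⟩
  rw [q_coeff_top m s hs] at this
  simp at this

lemma mu_injective (m : ℕ) : Function.Injective (fun s : Fin (m + 1) => μ m (s : ℕ)) := by
  intro s t h
  have h17 : Real.sqrt 17 ≠ 0 := ne_of_gt (Real.sqrt_pos.mpr (by norm_num))
  unfold μ at h
  simp only at h
  have h2 : ((m:ℝ) - 2 * (s:ℕ)) * Real.sqrt 17 = ((m:ℝ) - 2 * (t:ℕ)) * Real.sqrt 17 := by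
    linarith
  have h3 := mul_right_cancel₀ h17 h2
  have h4 : ((s:ℕ):ℝ) = ((t:ℕ):ℝ) := by linarith
  exact Fin.ext (Nat.cast_injective h4)

lemma charpoly_diagonal {n : Type*} [Fintype n] [DecidableEq n] (d : n → ℝ) :
    (Matrix.diagonal d).charpoly = ∏ i, (X - C (d i)) := by
  have hch : Matrix.charmatrix (Matrix.diagonal d)
      = Matrix.diagonal (fun i => (X : ℝ[X]) - C (d i)) := by
    ext i j
    by_cases h : i = j
    · subst h
      rw [Matrix.charmatrix_apply_eq, Matrix.diagonal_apply_eq, Matrix.diagonal_apply_eq]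
    · rw [Matrix.charmatrix_apply_ne _ _ _ h, Matrix.diagonal_apply_ne _ h,
        Matrix.diagonal_apply_ne _ h, map_zero, neg_zero]
  rw [Matrix.charpoly, hch, Matrix.det_diagonal]

end PaperAux

open PaperAux in
/-- The characteristic polynomial of `A_m` factors as
`∏_{s=0}^{m} (X - (3m/2 + (m-2s)·√17/2))`, i.e. the eigenvalues of `A_m`
counted with multiplicity are `s·λ₁ + (m-s)·λ₂`, `s = 0,…,m`, where
`λ₁ = (3-√17)/2` and `λ₂ = (3+√17)/2`. -/
theorem charpoly_paperA (m : ℕ) (hm : 1 ≤ m) :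
    (paperA m).charpoly =
      ∏ s ∈ Finset.range (m + 1),
        (Polynomial.X -
          Polynomial.C (3 * (m : ℝ) / 2 + ((m : ℝ) - 2 * (s : ℝ)) * Real.sqrt 17 / 2)) := by
  classical
  set f : Module.End ℝ (Fin (m + 1) → ℝ) := Matrix.toLin' (paperA m) with hf
  set v : Fin (m + 1) → (Fin (m + 1) → ℝ) :=
    fun s => fun j => (q m (s : ℕ)).coeff (j : ℕ) with hv
  have heig : ∀ s : Fin (m + 1), f.HasEigenvector (μ m (s : ℕ)) (v s) := by
    intro s
    have hs : (s : ℕ) ≤ m := Nat.lt_succ_iff.mp s.isLt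
    refine Module.End.hasEigenvector_iff.mpr ⟨Module.End.mem_eigenspace_iff.mpr ?_,
      eigen_nonzero m s hs⟩
    rw [hf]
    rw [Matrix.toLin'_apply]
    exact mulVec_eigen m (s : ℕ) hs
  have li : LinearIndependent ℝ v :=
    Module.End.eigenvectors_linearIndependent' (ι := Fin (m + 1)) f (fun s => μ m (s : ℕ)) (mu_injective m) v heig
  have hcard : Fintype.card (Fin (m + 1)) = Module.finrank ℝ (Fin (m + 1) → ℝ) := by
    simp [Module.finrank_fin_fun]
  let B : Module.Basis (Fin (m + 1)) ℝ (Fin (m + 1) → ℝ) :=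
    basisOfLinearIndependentOfCardEqFinrank li hcard
  have hB : ⇑B = v := coe_basisOfLinearIndependentOfCardEqFinrank li hcard
  have hdiag : LinearMap.toMatrix B B f = Matrix.diagonal (fun s : Fin (m + 1) => μ m (s : ℕ)) := by
    ext i j
    rw [LinearMap.toMatrix_apply]
    have hfB : f (B j) = μ m (j : ℕ) • B j := by
      rw [show B j = v j from congrFun hB j]
      exact (heig j).apply_eq_smul
    rw [hfB, map_smul]
    simp only [Module.Basis.repr_self, Finsupp.smul_single, smul_eq_mul, mul_one]
    rw [Finsupp.single_apply]
    by_cases h : i = j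
    · subst h; simp [Matrix.diagonal_apply_eq]
    · simp [Matrix.diagonal_apply_ne _ h, (Ne.symm h : j ≠ i)]
  have step1 : (paperA m).charpoly = (LinearMap.toMatrix' f).charpoly := by
    rw [hf, LinearMap.toMatrix'_toLin']
  have step2 : (LinearMap.toMatrix' f).charpoly = f.charpoly := by
    rw [← LinearMap.toMatrix_eq_toMatrix']
    exact LinearMap.charpoly_toMatrix f _
  have step3 : f.charpoly = (Matrix.diagonal (fun s : Fin (m + 1) => μ m (s : ℕ))).charpoly := by
    rw [← hdiag]
    exact (LinearMap.charpoly_toMatrix f B).symm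
  rw [step1, step2, step3, charpoly_diagonal,
    Fin.prod_univ_eq_prod_range (fun s => (X : ℝ[X]) - C (μ m s)) (m + 1)]
  rfl
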